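/- Assume dom(g) is a closed convex nonempty subset of Z, F : Z → Z is continuous and monotone on dom(g), and the solution set S := zer(F+∂g) of HVI(F,g) is nonempty and weakly sharp with modulus τ > 0, i.e. for every z* ∈ S one has τ·B(0,1) ⊆ F(z*) + ∂g(z*) + [T_{dom(g)}(z*) ∩ N_S(z*)]°. Then Θ(z | F,g,dom(g)) ≥ τ·dist(z,S) for all z ∈ dom(g). -/

import Mathlib

noncomputable section

open scoped RealInnerProductSpace
open Filter Topology

variable {Z : Type*} [NormedAddCommGroup Z] [InnerProductSpace ℝ Z] [CompleteSpace Z]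

/-- Effective domain of an extended-real-valued function. -/
def edom {Z : Type*} (g : Z → EReal) : Set Z := {z | g z < ⊤}

/-- `g` is proper, convex and lower semicontinuous. -/
structure ProperConvexLsc (g : Z → EReal) : Prop where
  ne_bot : ∀ z, g z ≠ ⊥
  proper : ∃ z, g z < ⊤
  convex : ∀ x y : Z, ∀ a b : ℝ, 0 ≤ a → 0 ≤ b → a + b = 1 →
    g (a • x + b • y) ≤ (a : EReal) * g x + (b : EReal) * g y
  lsc : LowerSemicontinuous g

/-- Monotonicity of an operator on a real Hilbert space. -/
def IsMonotoneOp (F : Z → Z) : Prop := ∀ x y : Z, 0 ≤ ⟪F x - F y, x - y⟫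

/-- Lipschitz continuity with (real) constant `L`. -/
def IsLipOp (L : ℝ) (F : Z → Z) : Prop := ∀ x y : Z, ‖F x - F y‖ ≤ L * ‖x - y‖

/-- The bifunction `H^{(F,g)}(z,y) = ⟪F y, z - y⟫ + g z - g y`. -/
def Hb (F : Z → Z) (g : Z → EReal) (z y : Z) : EReal :=
  ((⟪F y, z - y⟫ : ℝ) : EReal) + g z - g y

/-- The localized dual gap function `Θ(z | F,g,C)`. -/
def gapFn (F : Z → Z) (g : Z → EReal) (C : Set Z) (z : Z) : EReal :=
  ⨆ y ∈ C, Hb F g z y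

/-- The convex subdifferential of an extended-real-valued function. -/
def subdiff (g : Z → EReal) (x : Z) : Set Z :=
  {ξ : Z | ∀ y : Z, ((⟪ξ, y - x⟫ : ℝ) : EReal) + g x ≤ g y}

/-- The solution set `zer(F + ∂g)`. -/
def zerFg (F : Z → Z) (g : Z → EReal) : Set Z := {z : Z | -F z ∈ subdiff g z}

/-- The normal cone to a set `C` at `z`. -/
def normalCone (C : Set Z) (z : Z) : Set Z :=
  {ξ : Z | z ∈ C ∧ ∀ z' ∈ C, ⟪ξ, z' - z⟫ ≤ 0}

/-- The solution set `zer(F + ∂g + N_C)`. -/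
def zerFgN (F : Z → Z) (g : Z → EReal) (C : Set Z) : Set Z :=
  {z : Z | ∃ ξ ∈ subdiff g z, ∃ p ∈ normalCone C z, F z + ξ + p = 0}

/-- The solution set `S₁` of problem (P): points of `S₂` solving the upper HVI over `S₂`. -/
def solP (F₁ : Z → Z) (g₁ : Z → EReal) (S₂ : Set Z) : Set Z :=
  {zs : Z | zs ∈ S₂ ∧ ∀ u ∈ S₂, 0 ≤ Hb F₁ g₁ u zs}

/-- `(α,ρ)`-weak sharpness of the solution set `S` of `HVI(F,g)`. -/
def WeakSharp (F : Z → Z) (g : Z → EReal) (S : Set Z) (α ρ : ℝ) : Prop :=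
  ∀ zs ∈ S, ∀ z ∈ edom g,
    (((α / ρ) * Metric.infDist z S ^ ρ : ℝ) : EReal) ≤ Hb F g z zs

/-- Support function of a set. -/
def suppFn (p : Z) (C : Set Z) : EReal := ⨆ z ∈ C, ((⟪p, z⟫ : ℝ) : EReal)

/-- The Fitzpatrick-type function `φ^{(F,g)}(z,u)`. -/
def phiFn (F : Z → Z) (g : Z → EReal) (z u : Z) : EReal :=
  ⨆ y ∈ edom g, (Hb F g z y + ((⟪y, u⟫ : ℝ) : EReal))

/-- `x = prox_{τ G}(u)`, via the variational characterization
`⟪u - x, v - x⟫ ≤ τ (G v - G x)` for all `v`. -/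
def IsProx (τ : ℝ) (G : Z → EReal) (u x : Z) : Prop :=
  ∀ v : Z, ((⟪u - x, v - x⟫ : ℝ) : EReal) ≤ (τ : EReal) * (G v - G x)

/-- The Tikhonov-regularized operator `V_k = F₂ + σ_k F₁`. -/
def Vop (F₁ F₂ : Z → Z) (σ : ℕ → ℝ) (k : ℕ) (x : Z) : Z := F₂ x + σ k • F₁ x

/-- The Tikhonov-regularized function `G_k = g₂ + σ_k g₁`. -/
def Gfun (g₁ g₂ : Z → EReal) (σ : ℕ → ℝ) (k : ℕ) (v : Z) : EReal :=
  g₂ v + ((σ k : ℝ) : EReal) * g₁ v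

/-- The Attouch–Czarnecki summability condition. -/
def ACcond (F₂ : Z → Z) (g₂ : Z → EReal) (S₂ : Set Z) (t σ : ℕ → ℝ) : Prop :=
  ∀ p : Z, (∃ zs : Z, p ∈ normalCone S₂ zs) →
    ∃ M : ℝ, ∀ K : ℕ,
      (∑ k ∈ Finset.Icc 1 K,
        ((t k : ℝ) : EReal) * ((⨆ zs ∈ S₂, phiFn F₂ g₂ zs (σ k • p)) - suppFn (σ k • p) S₂))
        ≤ (M : EReal)

/-- `T_K = ∑_{k=1}^K t_k`. -/
def Tsum (t : ℕ → ℝ) (K : ℕ) : ℝ := ∑ k ∈ Finset.Icc 1 K, t k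

/-- The ergodic average `z̄^K` (here `w k` plays the role of `z^{k+1/2}`). -/
def zbar (t : ℕ → ℝ) (w : ℕ → Z) (K : ℕ) : Z :=
  (Tsum t K)⁻¹ • ∑ k ∈ Finset.Icc 1 K, t k • w k

/-- Weights `γ_k = 1/∏_{i=1}^k (1 - t_i σ_i μ)` (so `γ_0 = 1`). -/
def gammaW (t σ : ℕ → ℝ) (μ : ℝ) (k : ℕ) : ℝ :=
  (∏ i ∈ Finset.Icc 1 k, (1 - t i * σ i * μ))⁻¹

/-- The weighted ergodic average used in the strongly monotone case. -/
def zbarW (t σ : ℕ → ℝ) (μ : ℝ) (w : ℕ → Z) (K : ℕ) : Z :=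
  (∑ i ∈ Finset.Icc 1 K, t i * σ i * gammaW t σ μ i)⁻¹ •
    ∑ i ∈ Finset.Icc 1 K, (t i * σ i * gammaW t σ μ i) • w i

/-- Convex tangent cone `T_C(x) = cl(⋃_{λ>0} (C - x)/λ)`. -/
def tangentConeCvx (C : Set Z) (x : Z) : Set Z :=
  closure {v : Z | ∃ lam : ℝ, 0 < lam ∧ ∃ c ∈ C, v = lam⁻¹ • (c - x)}

/-- Polar cone of a set. -/
def polarCone (K : Set Z) : Set Z := {z : Z | ∀ x ∈ K, ⟪z, x⟫ ≤ 0}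

/-- Points of `zer(F+∂g)` lie in the domain of `g`. -/
lemma zerFg_subset_edom' (F : Z → Z) (g : Z → EReal) (hg : ProperConvexLsc g) :
    zerFg F g ⊆ edom g := by
  intro zs hzs
  obtain ⟨y0, hy0⟩ := hg.proper
  by_contra htop
  have hgz : g zs = ⊤ := by
    simp only [edom, Set.mem_setOf_eq, not_lt, top_le_iff] at htop; exact htop
  have h := hzs y0
  rw [hgz, EReal.add_top_of_ne_bot (EReal.coe_ne_bot _)] at h
  exact absurd (top_le_iff.mp h) hy0.ne

/-- The Minty set associated with `(F, g)`. -/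
def mintySet (F : Z → Z) (g : Z → EReal) : Set Z :=
  {z : Z | ∀ y ∈ edom g, ((⟪F y, z - y⟫ : ℝ) : EReal) + g z ≤ g y}

lemma mintySet_subset_edom (F : Z → Z) (g : Z → EReal)
    (hdom_ne : (edom g).Nonempty) : mintySet F g ⊆ edom g := by
  intro z hz
  obtain ⟨y, hy⟩ := hdom_ne
  by_contra htop
  have hgz : g z = ⊤ := by
    simp only [edom, Set.mem_setOf_eq, not_lt, top_le_iff] at htop; exact htop
  have h := hz y hy
  rw [hgz, EReal.add_top_of_ne_bot (EReal.coe_ne_bot _)] at h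
  exact absurd (top_le_iff.mp h) hy.ne

lemma zerFg_subset_minty (F : Z → Z) (g : Z → EReal) (hg : ProperConvexLsc g)
    (hFmono : ∀ x ∈ edom g, ∀ y ∈ edom g, 0 ≤ ⟪F x - F y, x - y⟫) :
    zerFg F g ⊆ mintySet F g := by
  intro zs hzs y hy
  have hzd : zs ∈ edom g := zerFg_subset_edom' F g hg hzs
  have h1 := hzs y
  refine le_trans (add_le_add_left ?_ (g zs)) h1
  rw [EReal.coe_le_coe_iff]
  have hm := hFmono zs hzd y hy
  simp only [inner_sub_left, inner_sub_right, inner_neg_left] at hm ⊢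
  linarith

lemma mintySet_convex (F : Z → Z) (g : Z → EReal) (hg : ProperConvexLsc g)
    (hdom_ne : (edom g).Nonempty) : Convex ℝ (mintySet F g) := by
  intro z1 hz1 z2 hz2 a b ha hb hab
  intro y hy
  have hz1d : z1 ∈ edom g := mintySet_subset_edom F g hdom_ne hz1
  have hz2d : z2 ∈ edom g := mintySet_subset_edom F g hdom_ne hz2
  set r1 := (g z1).toReal
  set r2 := (g z2).toReal
  set ry := (g y).toReal
  have hg1 : g z1 = (r1 : EReal) := (EReal.coe_toReal hz1d.ne (hg.ne_bot z1)).symm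
  have hg2 : g z2 = (r2 : EReal) := (EReal.coe_toReal hz2d.ne (hg.ne_bot z2)).symm
  have hgy : g y = (ry : EReal) := (EReal.coe_toReal hy.ne (hg.ne_bot y)).symm
  have h1 : ⟪F y, z1 - y⟫ + r1 ≤ ry := by
    have := hz1 y hy
    rw [hg1, hgy, ← EReal.coe_add, EReal.coe_le_coe_iff] at this
    exact this
  have h2 : ⟪F y, z2 - y⟫ + r2 ≤ ry := by
    have := hz2 y hy
    rw [hg2, hgy, ← EReal.coe_add, EReal.coe_le_coe_iff] at this
    exact this
  have hcvx : g (a • z1 + b • z2) ≤ ((a * r1 + b * r2 : ℝ) : EReal) := by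
    have := hg.convex z1 z2 a b ha hb hab
    rw [hg1, hg2] at this
    calc g (a • z1 + b • z2) ≤ (a : EReal) * (r1 : EReal) + (b : EReal) * (r2 : EReal) := this
      _ = ((a * r1 + b * r2 : ℝ) : EReal) := by
          rw [← EReal.coe_mul, ← EReal.coe_mul, ← EReal.coe_add]
  have hvec : a • z1 + b • z2 - y = a • (z1 - y) + b • (z2 - y) := by
    have h' : a • (z1 - y) + b • (z2 - y) = a • z1 + b • z2 - (a + b) • y := by
      rw [smul_sub, smul_sub, add_smul]; abel
    rw [h', hab, one_smul]
  have hinner : ⟪F y, a • z1 + b • z2 - y⟫ = a * ⟪F y, z1 - y⟫ + b * ⟪F y, z2 - y⟫ := by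
    rw [hvec, inner_add_right, real_inner_smul_right, real_inner_smul_right]
  calc ((⟪F y, a • z1 + b • z2 - y⟫ : ℝ) : EReal) + g (a • z1 + b • z2)
      ≤ ((⟪F y, a • z1 + b • z2 - y⟫ : ℝ) : EReal) + ((a * r1 + b * r2 : ℝ) : EReal) :=
        add_le_add_right hcvx _
    _ = ((⟪F y, a • z1 + b • z2 - y⟫ + (a * r1 + b * r2) : ℝ) : EReal) :=
        (EReal.coe_add _ _).symm
    _ ≤ ((ry : ℝ) : EReal) := by
        rw [EReal.coe_le_coe_iff, hinner]
        have hry : a * ry + b * ry = ry := by rw [← add_mul, hab, one_mul]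
        nlinarith [mul_le_mul_of_nonneg_left h1 ha, mul_le_mul_of_nonneg_left h2 hb, hry]
    _ = g y := hgy.symm

lemma mintySet_closed (F : Z → Z) (g : Z → EReal) (hg : ProperConvexLsc g) :
    IsClosed (mintySet F g) := by
  have heq : mintySet F g =
      ⋂ y ∈ edom g, {z : Z | ((⟪F y, z - y⟫ : ℝ) : EReal) + g z ≤ g y} := by
    ext z; simp only [mintySet, Set.mem_setOf_eq, Set.mem_iInter]
  rw [heq]
  refine isClosed_biInter fun y hy => ?_
  rw [← isOpen_compl_iff, isOpen_iff_mem_nhds]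
  intro z hz
  simp only [Set.mem_compl_iff, Set.mem_setOf_eq, not_le] at hz
  set ry := (g y).toReal
  have hgy : g y = (ry : EReal) := (EReal.coe_toReal hy.ne (hg.ne_bot y)).symm
  have hlt : ((ry - ⟪F y, z - y⟫ : ℝ) : EReal) < g z := by
    rcases eq_or_ne (g z) ⊤ with h | h
    · rw [h]; exact EReal.coe_lt_top _
    · have hgz : g z = ((g z).toReal : EReal) := (EReal.coe_toReal h (hg.ne_bot z)).symm
      rw [hgz, EReal.coe_lt_coe_iff]
      rw [hgy, hgz, ← EReal.coe_add, EReal.coe_lt_coe_iff] at hz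
      linarith
  obtain ⟨c, hc1, hc2⟩ := EReal.exists_between_coe_real hlt
  have hev1 : ∀ᶠ z' in 𝓝 z, ry - ⟪F y, z' - y⟫ < c := by
    have hcont : Continuous fun z' : Z => ry - ⟪F y, z' - y⟫ :=
      continuous_const.sub (Continuous.inner continuous_const (continuous_id.sub continuous_const))
    have : Tendsto (fun z' : Z => ry - ⟪F y, z' - y⟫) (𝓝 z) (𝓝 (ry - ⟪F y, z - y⟫)) :=
      hcont.tendsto z
    exact this.eventually_lt_const (by exact_mod_cast hc1)
  have hev2 : ∀ᶠ z' in 𝓝 z, (c : EReal) < g z' := hg.lsc z c hc2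
  filter_upwards [hev1, hev2] with z' h1 h2
  simp only [Set.mem_compl_iff, Set.mem_setOf_eq, not_le]
  rw [hgy]
  calc (ry : EReal) = ((⟪F y, z' - y⟫ + (ry - ⟪F y, z' - y⟫) : ℝ) : EReal) := by norm_num
    _ < ((⟪F y, z' - y⟫ + c : ℝ) : EReal) := by rw [EReal.coe_lt_coe_iff]; linarith
    _ = ((⟪F y, z' - y⟫ : ℝ) : EReal) + (c : EReal) := EReal.coe_add _ _
    _ ≤ ((⟪F y, z' - y⟫ : ℝ) : EReal) + g z' := add_le_add_right h2.le _

lemma minty_subset_zerFg (F : Z → Z) (g : Z → EReal) (hg : ProperConvexLsc g)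
    (hdom_cvx : Convex ℝ (edom g)) (hdom_ne : (edom g).Nonempty)
    (hFcont : ContinuousOn F (edom g)) :
    mintySet F g ⊆ zerFg F g := by
  intro z hz
  have hzd : z ∈ edom g := mintySet_subset_edom F g hdom_ne hz
  intro y
  by_cases hy : y ∈ edom g
  · set rz := (g z).toReal
    set ry := (g y).toReal
    have hgz : g z = (rz : EReal) := (EReal.coe_toReal hzd.ne (hg.ne_bot z)).symm
    have hgy : g y = (ry : EReal) := (EReal.coe_toReal hy.ne (hg.ne_bot y)).symm
    have key : ∀ t : ℝ, t ∈ Set.Ioc (0:ℝ) 1 →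
        -⟪F (z + t • (y - z)), y - z⟫ ≤ ry - rz := by
      intro t ht
      have hyt : z + t • (y - z) ∈ edom g := by
        have hcomb : z + t • (y - z) = (1 - t) • z + t • y := by
          rw [smul_sub, sub_smul, one_smul]; abel
        rw [hcomb]
        exact hdom_cvx hzd hy (by linarith [ht.2]) ht.1.le (by ring)
      have h1 := hz _ hyt
      have hinner : ⟪F (z + t • (y - z)), z - (z + t • (y - z))⟫
          = -(t * ⟪F (z + t • (y - z)), y - z⟫) := by
        have : z - (z + t • (y - z)) = -(t • (y - z)) := by abel
        rw [this, inner_neg_right, real_inner_smul_right]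
      have hcvx : g (z + t • (y - z)) ≤ (((1 - t) * rz + t * ry : ℝ) : EReal) := by
        have hcomb : z + t • (y - z) = (1 - t) • z + t • y := by
          rw [smul_sub, sub_smul, one_smul]; abel
        have := hg.convex z y (1 - t) t (by linarith [ht.2]) ht.1.le (by ring)
        rw [hgz, hgy, ← EReal.coe_mul, ← EReal.coe_mul, ← EReal.coe_add] at this
        rw [hcomb]; exact this
      have hchain : ((-(t * ⟪F (z + t • (y - z)), y - z⟫) + rz : ℝ) : EReal)
          ≤ (((1 - t) * rz + t * ry : ℝ) : EReal) := by
        calc ((-(t * ⟪F (z + t • (y - z)), y - z⟫) + rz : ℝ) : EReal)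
            = ((⟪F (z + t • (y - z)), z - (z + t • (y - z))⟫ : ℝ) : EReal) + g z := by
              rw [hgz, ← EReal.coe_add, hinner]
          _ ≤ g (z + t • (y - z)) := h1
          _ ≤ _ := hcvx
      rw [EReal.coe_le_coe_iff] at hchain
      have h2 : t * (-⟪F (z + t • (y - z)), y - z⟫) ≤ t * (ry - rz) := by nlinarith
      exact (mul_le_mul_iff_right₀ ht.1).mp h2
    have hpath : Tendsto (fun t : ℝ => z + t • (y - z)) (𝓝[>] 0) (𝓝[edom g] z) := by
      apply tendsto_nhdsWithin_of_tendsto_nhds_of_eventually_within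
      · have hc : Continuous fun t : ℝ => z + t • (y - z) := by fun_prop
        have h0 : Tendsto (fun t : ℝ => z + t • (y - z)) (𝓝 0) (𝓝 z) := by
          have := hc.tendsto 0
          simpa using this
        exact h0.mono_left nhdsWithin_le_nhds
      · filter_upwards [Ioc_mem_nhdsGT_of_mem (Set.mem_Ico.mpr ⟨le_refl 0, zero_lt_one⟩)]
          with t ht
        have hcomb : z + t • (y - z) = (1 - t) • z + t • y := by
          rw [smul_sub, sub_smul, one_smul]; abel
        rw [hcomb]
        exact hdom_cvx hzd hy (by linarith [ht.2]) ht.1.le (by ring)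
    have hF : Tendsto (fun t : ℝ => F (z + t • (y - z))) (𝓝[>] 0) (𝓝 (F z)) :=
      (hFcont z hzd).tendsto.comp hpath
    have hlim : Tendsto (fun t : ℝ => -⟪F (z + t • (y - z)), y - z⟫) (𝓝[>] 0)
        (𝓝 (-⟪F z, y - z⟫)) :=
      (hF.inner tendsto_const_nhds).neg
    have hfin : -⟪F z, y - z⟫ ≤ ry - rz :=
      le_of_tendsto hlim
        (Filter.eventually_of_mem
          (Ioc_mem_nhdsGT_of_mem (Set.mem_Ico.mpr ⟨le_refl 0, zero_lt_one⟩)) key)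
    rw [hgz, hgy, ← EReal.coe_add, EReal.coe_le_coe_iff, inner_neg_left]
    linarith
  · have hgy : g y = ⊤ := by
      simp only [edom, Set.mem_setOf_eq, not_lt, top_le_iff] at hy; exact hy
    rw [hgy]; exact le_top

/-- weak sharpness of the solution set implies the error bound
`Θ(z | F,g,dom g) ≥ τ · dist(z, S)` on `dom(g)`. -/
theorem weakSharp_implies_errorBound
    (F : Z → Z) (g : Z → EReal) (τ : ℝ) (hτ : 0 < τ)
    (hg : ProperConvexLsc g)
    (hdom_closed : IsClosed (edom g)) (hdom_cvx : Convex ℝ (edom g))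
    (hdom_ne : (edom g).Nonempty)
    (hFcont : ContinuousOn F (edom g))
    (hFmono : ∀ x ∈ edom g, ∀ y ∈ edom g, 0 ≤ ⟪F x - F y, x - y⟫)
    (hSne : (zerFg F g).Nonempty)
    (hsharp : ∀ zs ∈ zerFg F g, ∀ b : Z, ‖b‖ ≤ 1 →
      ∃ ξ ∈ subdiff g zs,
        ∃ p ∈ polarCone (tangentConeCvx (edom g) zs ∩ normalCone (zerFg F g) zs),
          τ • b = F zs + ξ + p) :
    ∀ z ∈ edom g,
      ((τ * Metric.infDist z (zerFg F g) : ℝ) : EReal) ≤ gapFn F g (edom g) z := by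
  intro z hz
  have hSedom : zerFg F g ⊆ edom g := zerFg_subset_edom' F g hg
  have hSM : zerFg F g = mintySet F g :=
    subset_antisymm (zerFg_subset_minty F g hg hFmono)
      (minty_subset_zerFg F g hg hdom_cvx hdom_ne hFcont)
  have hScl : IsClosed (zerFg F g) := hSM ▸ mintySet_closed F g hg
  have hScv : Convex ℝ (zerFg F g) := hSM ▸ mintySet_convex F g hg hdom_ne
  obtain ⟨v, hvS, hvproj⟩ :=
    exists_norm_eq_iInf_of_complete_convex hSne hScl.isComplete hScv z
  have hnc : ∀ w ∈ zerFg F g, ⟪z - v, w - v⟫ ≤ 0 :=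
    (norm_eq_iInf_iff_real_inner_le_zero hScv hvS).mp hvproj
  have hvdom : v ∈ edom g := hSedom hvS
  set b := ‖z - v‖⁻¹ • (z - v) with hb
  have hbnorm : ‖b‖ ≤ 1 := by
    rw [hb, norm_smul, norm_inv, norm_norm]
    rcases eq_or_ne ‖z - v‖ 0 with h | h
    · simp [h]
    · rw [inv_mul_cancel₀ h]
  obtain ⟨ξ, hξ, p, hp, heq⟩ := hsharp v hvS b hbnorm
  have hinner_b : ⟪b, z - v⟫ = ‖z - v‖ := by
    rw [hb, real_inner_smul_left, real_inner_self_eq_norm_sq]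
    rcases eq_or_ne ‖z - v‖ 0 with h | h
    · simp [h]
    · field_simp
  set rz := (g z).toReal with hrz
  set rv := (g v).toReal with hrv
  have hgz : g z = (rz : EReal) := (EReal.coe_toReal hz.ne (hg.ne_bot z)).symm
  have hgv : g v = (rv : EReal) := (EReal.coe_toReal hvdom.ne (hg.ne_bot v)).symm
  have hxile : ⟪ξ, z - v⟫ ≤ rz - rv := by
    have := hξ z
    rw [hgz, hgv, ← EReal.coe_add, EReal.coe_le_coe_iff] at this
    linarith
  have htan : z - v ∈ tangentConeCvx (edom g) v :=
    subset_closure ⟨1, one_pos, z, hz, by rw [inv_one, one_smul]⟩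
  have hple : ⟪p, z - v⟫ ≤ 0 := hp (z - v) ⟨htan, hvS, fun w hw => hnc w hw⟩
  have hmain : τ * ‖z - v‖ ≤ ⟪F v, z - v⟫ + (rz - rv) := by
    have h1 : ⟪τ • b, z - v⟫ = τ * ‖z - v‖ := by
      rw [real_inner_smul_left, hinner_b]
    rw [heq, inner_add_left, inner_add_left] at h1
    linarith
  have hdist : Metric.infDist z (zerFg F g) ≤ ‖z - v‖ := by
    have := Metric.infDist_le_dist_of_mem (x := z) hvS
    rwa [dist_eq_norm] at this
  have hHb : Hb F g z v = ((⟪F v, z - v⟫ + rz - rv : ℝ) : EReal) := by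
    rw [Hb, hgz, hgv, ← EReal.coe_add, ← EReal.coe_sub]
  calc ((τ * Metric.infDist z (zerFg F g) : ℝ) : EReal)
      ≤ ((⟪F v, z - v⟫ + rz - rv : ℝ) : EReal) := by
        rw [EReal.coe_le_coe_iff]
        have := mul_le_mul_of_nonneg_left hdist hτ.le
        linarith
    _ = Hb F g z v := hHb.symm
    _ ≤ gapFn F g (edom g) z := le_iSup₂ (f := fun y (_ : y ∈ edom g) => Hb F g z y) v hvdom

end
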